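/- There is a universal constant C with the following property. For every integer N ≥ 5 and every bitmask A ∈ {0,1}^n with n ≥ 1, there exist an integer h with 1 ≤ h ≤ C·(1 + |⟨A⟩|/log₂ N) and nondecreasing integer sequences p_0 ≤ p_1 ≤ ⋯ ≤ p_h, e_0 ≤ e_1 ≤ ⋯ ≤ e_h, and r_0 ≤ r_1 ≤ ⋯ ≤ r_h, with p_0 = e_0 = 0, p_h = n, e_h = |⟨A⟩|, such that for every i ∈ [0..h]: r_i = rank_A(p_i); and for every i ∈ [0..h): the bit string ⟨A⟩[e_i..e_{i+1}) equals ⟨A[p_i..p_{i+1})⟩, and either A[p_i..p_{i+1}) is all-zero or r_{i+1} − r_i ≤ e_{i+1} − e_i ≤ log₂ N. -/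

import Mathlib

namespace SyncFormal

/-- The fragment `T[i..j)` of a string `T`. -/
def frag {α : Type*} (T : List α) (i j : ℕ) : List α :=
  (T.drop i).take (j - i)

/-- `p` is a period of the string `S`. -/
def IsPeriod {α : Type*} (S : List α) (p : ℕ) : Prop :=
  1 ≤ p ∧ p ≤ S.length ∧ ∀ i : ℕ, i + p < S.length → S[i]? = S[i + p]?

/-- `per S`: the smallest period of `S`. -/
noncomputable def per {α : Type*} (S : List α) : ℕ :=
  sInf {p | IsPeriod S p}

/-- `Sync` is a `τ`-synchronizing set of `T`. -/
def IsSyncSet {α : Type*} (T : List α) (τ : ℕ) (Sync : Set ℕ) : Prop :=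
  (∀ i ∈ Sync, i + 2 * τ ≤ T.length) ∧
  (∀ i j : ℕ, i + 2 * τ ≤ T.length → j + 2 * τ ≤ T.length → i ∈ Sync →
    frag T i (i + 2 * τ) = frag T j (j + 2 * τ) → j ∈ Sync) ∧
  (∀ i : ℕ, i + 3 * τ ≤ T.length + 1 →
    (Set.Ico i (i + τ) ∩ Sync = ∅ ↔ 3 * per (frag T i (i + 3 * τ - 1)) ≤ τ))

/-- `T[b..e)` is a run (maximal repetition) in `T`. -/
def IsRun {α : Type*} (T : List α) (b e : ℕ) : Prop :=
  b < e ∧ e ≤ T.length ∧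
  2 * per (frag T b e) ≤ e - b ∧
  (b = 0 ∨ T[b - 1]? ≠ T[b - 1 + per (frag T b e)]?) ∧
  (e = T.length ∨ T[e]? ≠ T[e - per (frag T b e)]?)

/-- `T[b..e)` is a run of length at least `ℓ` and period at most `p`
(i.e., an element of `RUNS_{ℓ,p}(T)`). -/
def IsRunLP {α : Type*} (T : List α) (ℓ p b e : ℕ) : Prop :=
  IsRun T b e ∧ ℓ ≤ e - b ∧ per (frag T b e) ≤ p

/-- `λ_k = (8/7)^⌊k/2⌋`. -/
noncomputable def lam (k : ℕ) : ℝ := (8 / 7 : ℝ) ^ (k / 2)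

/-- `α_0 = 1`, `α_{k+1} = α_k + ⌊λ_k⌋`. -/
noncomputable def alph : ℕ → ℕ
  | 0 => 1
  | k + 1 => alph k + ⌊lam k⌋₊

/-- `m`-fold concatenation `R^m`. -/
def listPow {α : Type*} (R : List α) : ℕ → List α
  | 0 => []
  | m + 1 => R ++ listPow R m

/-- The length of the primitive root of `S`
(the shortest prefix `R` of `S` with `S = R^m` for some `m ≥ 1`). -/
noncomputable def primRootLen {α : Type*} (S : List α) : ℕ :=
  sInf {r | 0 < r ∧ ∃ m : ℕ, 1 ≤ m ∧ S = listPow (S.take r) m}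

/-- `i` and `j` are consecutive elements of the set `S`. -/
def Consecutive (S : Set ℕ) (i j : ℕ) : Prop :=
  i ∈ S ∧ j ∈ S ∧ i < j ∧ ∀ m ∈ S, m ≤ i ∨ j ≤ m

/-- `(B k)_{k ∈ ℕ}` is a recompression chain for `T`. -/
def IsRecompressionChain {α : Type*} (T : List α) (B : ℕ → Set ℕ) : Prop :=
  B 0 = Set.Ico 1 T.length ∧
  (∀ k, B (k + 1) ⊆ B k) ∧
  (∀ k, B k ⊆ Set.Ico 1 T.length) ∧
  (∀ k, (B k).Finite ∧ ((B k).ncard : ℝ) * lam k ≤ 4 * T.length) ∧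
  (∀ k i j : ℕ, alph k ≤ i → i + alph k ≤ T.length → alph k ≤ j → j + alph k ≤ T.length →
    i ∈ B k → frag T (i - alph k) (i + alph k) = frag T (j - alph k) (j + alph k) → j ∈ B k) ∧
  (∀ k i j : ℕ, Consecutive (B k ∪ {0, T.length}) i j →
    (((j - i : ℕ) : ℝ) ≤ 7 / 4 * lam k ∨ (primRootLen (frag T i j) : ℝ) ≤ lam k))

/-- `k(τ) = max{ j : j = 0 ∨ 16·λ_{j-1} ≤ τ }`. -/
noncomputable def kOf (τ : ℕ) : ℕ :=
  sSup {j : ℕ | j = 0 ∨ 16 * lam (j - 1) ≤ (τ : ℝ)}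

/-- The Elias-γ code of a positive integer `x`:
`⌊log₂ x⌋` zeros followed by the binary representation of `x` (MSB first). -/
def eliasGamma (x : ℕ) : List Bool :=
  List.replicate (Nat.log 2 x) false ++ (Nat.bits x).reverse

/-- Sparse encoding, with `z` pending zeros in front of the remaining sequence. -/
def sparseEncAux : ℕ → List ℕ → List Bool
  | z, [] => if z = 0 then [] else false :: eliasGamma z
  | z, 0 :: rest => sparseEncAux (z + 1) rest
  | z, x :: rest =>
      (if z = 0 then [] else false :: eliasGamma z) ++ (true :: eliasGamma x)
        ++ sparseEncAux 0 rest

/-- The sparse encoding `⟨A⟩` of a sequence of non-negative integers. -/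
def sparseEnc (A : List ℕ) : List Bool := sparseEncAux 0 A

/-- Number of bits contributed by the zero-run tokens of the sparse encoding,
with `z` pending zeros. -/
def zeroRunBitsAux : ℕ → List ℕ → ℕ
  | z, [] => if z = 0 then 0 else 2 * Nat.log 2 z + 2
  | z, 0 :: rest => zeroRunBitsAux (z + 1) rest
  | z, _ :: rest => (if z = 0 then 0 else 2 * Nat.log 2 z + 2) + zeroRunBitsAux 0 rest

/-- Number of bits contributed by zero-run tokens to `⟨A⟩`. -/
def zeroRunBits (A : List ℕ) : ℕ := zeroRunBitsAux 0 A

/-- The natural number whose binary representation (MSB first) is `B`. -/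
def bitsToNat (B : List Bool) : ℕ :=
  B.foldl (fun n b => 2 * n + cond b 1 0) 0

/-- The symbol of the zipped string for a column of values. -/
def zipSym (col : List ℕ) : ℕ :=
  if col.all (· == 0) then 0 else bitsToNat (sparseEnc col)

/-- `zip(A_1, …, A_t)` for sequences of common length `n`. -/
def zipSeqs (A : List (List ℕ)) (n : ℕ) : List ℕ :=
  (List.range n).map fun i => zipSym (A.map fun S => S.getD i 0)

/-- Running a deterministic transducer with transition function `δ` from state `s`
on an input string: returns the state sequence `s_0, …, s_n` and the output string. -/
def runAux {Q Γ I : Type*} (δ : Q → I → Q × Γ) : Q → List I → List Q × List Γ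
  | s, [] => ([s], [])
  | s, x :: xs =>
      (s :: (runAux δ (δ s x).1 xs).1, (δ s x).2 :: (runAux δ (δ s x).1 xs).2)

/-- `R_{ℓ,p}(T) = { i : per(T[i..i+ℓ)) ≤ p }`. -/
def RSet {α : Type*} (T : List α) (ℓ p : ℕ) : Set ℕ :=
  {i | i + ℓ ≤ T.length ∧ per (frag T i (i + ℓ)) ≤ p}

lemma sparseEncAux_zero_cons (z : ℕ) (rest : List ℕ) :
    sparseEncAux z (0 :: rest) = sparseEncAux (z + 1) rest := rfl

lemma sparseEncAux_pos (z n : ℕ) (rest : List ℕ) :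
    sparseEncAux z ((n + 1) :: rest) =
      (if z = 0 then [] else false :: eliasGamma z) ++ (true :: eliasGamma (n + 1))
        ++ sparseEncAux 0 rest := rfl

lemma sparseEncAux_nil (z : ℕ) :
    sparseEncAux z [] = if z = 0 then [] else false :: eliasGamma z := rfl

lemma sparseEncAux_replicate (c : ℕ) : ∀ (z : ℕ) (L : List ℕ),
    sparseEncAux z (List.replicate c 0 ++ L) = sparseEncAux (z + c) L := by
  induction c with
  | zero => intro z L; simp
  | succ c ih =>
    intro z L
    rw [List.replicate_succ, List.cons_append, sparseEncAux_zero_cons, ih]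
    congr 1; omega

lemma sparseEnc_replicate (z : ℕ) :
    sparseEnc (List.replicate z 0) = sparseEncAux z [] := by
  have := sparseEncAux_replicate z 0 []
  simpa [sparseEnc] using this

lemma sparseEnc_rep_append (z : ℕ) (L : List ℕ) :
    sparseEnc (List.replicate z 0 ++ L) = sparseEncAux z L := by
  have := sparseEncAux_replicate z 0 L
  simpa [sparseEnc] using this

lemma eliasGamma_one : eliasGamma 1 = [true] := by
  simp [eliasGamma]

lemma sparseEnc_one_cons (g : List ℕ) :
    sparseEnc (1 :: g) = true :: true :: sparseEnc g := by
  show sparseEncAux 0 (1 :: g) = _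
  rw [show (1 : ℕ) = 0 + 1 from rfl, sparseEncAux_pos]
  simp [eliasGamma_one, sparseEnc]

lemma count_one_le_enc : ∀ (g : List ℕ) (z : ℕ),
    g.count 1 ≤ (sparseEncAux z g).length
  | [], z => by simp
  | 0 :: rest, z => by
    rw [sparseEncAux_zero_cons]
    have := count_one_le_enc rest (z + 1)
    simpa using this
  | (n + 1) :: rest, z => by
    rw [sparseEncAux_pos]
    have := count_one_le_enc rest 0
    simp [List.count_cons]
    split_ifs <;> simp <;> omega

def att1 (K n : ℕ) (G : List (List ℕ)) : List (List ℕ) :=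
  match G with
  | [] => [[n + 1]]
  | g :: gs =>
    if 1 + (eliasGamma (n + 1)).length + (sparseEnc g).length ≤ K
    then ((n + 1) :: g) :: gs else [n + 1] :: g :: gs

def att0 (K z : ℕ) (G : List (List ℕ)) : List (List ℕ) :=
  if z = 0 then G else
  match G with
  | [] => [List.replicate z 0]
  | g :: gs =>
    if 1 + (eliasGamma z).length + (sparseEnc g).length ≤ K
    then (List.replicate z 0 ++ g) :: gs
    else List.replicate z 0 :: g :: gs

def grAux (K : ℕ) : ℕ → List ℕ → List (List ℕ)
  | z, [] => if z = 0 then [] else [List.replicate z 0]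
  | z, 0 :: rest => grAux K (z + 1) rest
  | z, (n + 1) :: rest => att0 K z (att1 K n (grAux K 0 rest))

def Good (K z : ℕ) (A : List ℕ) (P : List (List ℕ)) : Prop :=
  P.flatten = List.replicate z 0 ++ A ∧
  (P.map sparseEnc).flatten = sparseEncAux z A ∧
  (∀ g ∈ P, g ≠ []) ∧
  (∀ g ∈ P, (∀ x ∈ g, x = 0) ∨ (sparseEnc g).length ≤ K) ∧
  List.Chain' (fun a b => K < a + b) (P.map fun g => (sparseEnc g).length)

lemma att1_good (K : ℕ) (hK : 2 ≤ K) (rest : List ℕ) (G : List (List ℕ))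
    (hG : Good K 0 rest G) :
    Good K 0 (1 :: rest) (att1 K 0 G) ∧ ∃ t gs, att1 K 0 G = (1 :: t) :: gs := by
  obtain ⟨hj, he, hne, hd, hc⟩ := hG
  simp only [List.replicate_zero, List.nil_append] at hj
  have hpos : sparseEncAux 0 (1 :: rest) = true :: true :: sparseEncAux 0 rest := by
    rw [show (1 : ℕ) = 0 + 1 from rfl, sparseEncAux_pos]
    simp [eliasGamma_one]
  cases G with
  | nil =>
    have hrest : rest = [] := by simpa using hj
    subst hrest
    refine ⟨⟨?_, ?_, ?_, ?_, ?_⟩, [], [], rfl⟩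
    · simp [att1]
    · simp [att1, hpos, sparseEnc_one_cons, sparseEnc, sparseEncAux_nil]
    · simp [att1]
    · intro g hg
      right
      simp [att1] at hg
      subst hg
      rw [show ([1] : List ℕ) = 1 :: [] from rfl, sparseEnc_one_cons]
      simp [sparseEnc, sparseEncAux_nil]; omega
    · simp [att1, List.Chain', List.isChain_singleton]
  | cons g gs =>
    have h11 : sparseEnc [1] = [true, true] := by
      rw [show ([1] : List ℕ) = 1 :: [] from rfl, sparseEnc_one_cons]; rfl
    simp only [att1, zero_add, eliasGamma_one, List.length_cons, List.length_nil]
    split_ifs with htest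
    · refine ⟨⟨?_, ?_, ?_, ?_, ?_⟩, g, gs, rfl⟩
      · simpa using hj
      · simp only [List.map_cons, List.flatten_cons, sparseEnc_one_cons, hpos]
        simp only [List.map_cons, List.flatten_cons] at he
        simp [he]
      · intro g' hg'
        rcases List.mem_cons.mp hg' with h | h
        · subst h; simp
        · exact hne _ (List.mem_cons_of_mem _ h)
      · intro g' hg'
        rcases List.mem_cons.mp hg' with h | h
        · subst h; right; rw [sparseEnc_one_cons]; simp; omega
        · exact hd _ (List.mem_cons_of_mem _ h)
      · simp only [List.map_cons, sparseEnc_one_cons, List.length_cons]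
        simp only [List.map_cons] at hc
        cases gs with
        | nil => simp [List.Chain', List.isChain_singleton]
        | cons g2 gs2 =>
          simp only [List.map_cons, List.Chain', List.isChain_cons_cons] at hc ⊢
          exact ⟨by omega, hc.2⟩
    · refine ⟨⟨?_, ?_, ?_, ?_, ?_⟩, [], g :: gs, rfl⟩
      · simpa using hj
      · simp only [List.map_cons, List.flatten_cons, hpos, h11]
        simp only [List.map_cons, List.flatten_cons] at he
        simp [he]
      · intro g' hg'
        rcases List.mem_cons.mp hg' with h | h
        · subst h; simp
        · exact hne _ h
      · intro g' hg'
        rcases List.mem_cons.mp hg' with h | h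
        · subst h; right; rw [h11]; simp; omega
        · exact hd _ h
      · simp only [List.map_cons, List.Chain', List.isChain_cons_cons, h11]
        simp only [List.map_cons] at hc
        refine ⟨by simp; omega, hc⟩


lemma att0_good (K z n : ℕ) (A : List ℕ) (t : List ℕ) (gs : List (List ℕ))
    (hG : Good K 0 A (((n + 1) :: t) :: gs)) :
    Good K z A (att0 K z (((n + 1) :: t) :: gs)) := by
  by_cases hz : z = 0
  · subst hz
    simpa [att0] using hG
  obtain ⟨hj, he, hne, hd, hc⟩ := hG
  simp only [List.replicate_zero, List.nil_append] at hj
  simp only [List.flatten_cons] at hj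
  have hA : A = (n + 1) :: (t ++ gs.flatten) := hj.symm
  have e1 : sparseEncAux z A = (false :: eliasGamma z) ++ sparseEncAux 0 A := by
    rw [hA, sparseEncAux_pos, sparseEncAux_pos, if_neg hz, if_pos rfl]
    simp
  have e2 : sparseEnc (List.replicate z 0 ++ (n + 1) :: t)
      = (false :: eliasGamma z) ++ sparseEnc ((n + 1) :: t) := by
    rw [sparseEnc_rep_append, sparseEncAux_pos, if_neg hz]
    rw [show sparseEnc ((n + 1) :: t) = sparseEncAux 0 ((n + 1) :: t) from rfl,
      sparseEncAux_pos, if_pos rfl]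
    simp
  have e3 : sparseEnc (List.replicate z 0) = false :: eliasGamma z := by
    rw [sparseEnc_replicate, sparseEncAux_nil, if_neg hz]
  have heA : sparseEnc ((n + 1) :: t) ++ (List.map sparseEnc gs).flatten
      = sparseEncAux 0 A := by simpa using he
  simp only [att0, if_neg hz]
  split_ifs with htest
  · refine ⟨?_, ?_, ?_, ?_, ?_⟩
    · simp [hj, hA]
    · simp only [List.map_cons, List.flatten_cons, e2, e1]
      simp [heA]
    · intro g' hg'
      rcases List.mem_cons.mp hg' with h | h
      · subst h; simp [hz]
      · exact hne _ (List.mem_cons_of_mem _ h)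
    · intro g' hg'
      rcases List.mem_cons.mp hg' with h | h
      · subst h; right; rw [e2]; simp; omega
      · exact hd _ (List.mem_cons_of_mem _ h)
    · simp only [List.map_cons, e2, List.length_append, List.length_cons]
      simp only [List.map_cons] at hc
      cases gs with
      | nil => simp [List.Chain', List.isChain_singleton]
      | cons g2 gs2 =>
        simp only [List.map_cons, List.Chain', List.isChain_cons_cons] at hc ⊢
        exact ⟨by omega, hc.2⟩
  · refine ⟨?_, ?_, ?_, ?_, ?_⟩
    · simp [hj, hA]
    · simp only [List.map_cons, List.flatten_cons, e3, e1]
      simp [heA]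
    · intro g' hg'
      rcases List.mem_cons.mp hg' with h | h
      · subst h; simp [hz]
      · exact hne _ h
    · intro g' hg'
      rcases List.mem_cons.mp hg' with h | h
      · subst h; left; intro x hx; exact List.eq_of_mem_replicate hx
      · exact hd _ h
    · simp only [List.map_cons, List.Chain', List.isChain_cons_cons, e3]
      simp only [List.map_cons] at hc
      refine ⟨by simp; omega, hc⟩

lemma grAux_good (K : ℕ) (hK : 2 ≤ K) :
    ∀ (A : List ℕ), (∀ x ∈ A, x ≤ 1) → ∀ z : ℕ, Good K z A (grAux K z A)
  | [], _, z => by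
    by_cases hz : z = 0
    · subst hz
      refine ⟨?_, ?_, ?_, ?_, ?_⟩ <;> simp [grAux, sparseEncAux_nil, List.Chain', List.isChain_nil]
    · simp only [grAux, if_neg hz]
      refine ⟨?_, ?_, ?_, ?_, ?_⟩
      · simp
      · simp [sparseEnc_replicate]
      · simp [hz]
      · intro g hg
        simp at hg
        subst hg
        exact Or.inl fun x hx => List.eq_of_mem_replicate hx
      · simp [List.Chain', List.isChain_singleton]
  | 0 :: rest, hA, z => by
    have ih := grAux_good K hK rest (fun x hx => hA x (List.mem_cons_of_mem _ hx)) (z + 1)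
    obtain ⟨hj, he, hne, hd, hc⟩ := ih
    show Good K z (0 :: rest) (grAux K (z + 1) rest)
    refine ⟨?_, ?_, hne, hd, hc⟩
    · rw [hj, List.replicate_succ']
      simp
    · rw [he, sparseEncAux_zero_cons]
  | (n + 1) :: rest, hA, z => by
    have hn : n = 0 := by have := hA (n + 1) List.mem_cons_self; omega
    subst hn
    have ih := grAux_good K hK rest (fun x hx => hA x (List.mem_cons_of_mem _ hx)) 0
    obtain ⟨h1, t, gs, hshape⟩ := att1_good K hK rest _ ih
    show Good K z ((0 + 1) :: rest) (att0 K z (att1 K 0 (grAux K 0 rest)))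
    rw [hshape] at h1 ⊢
    simp only [zero_add]
    exact att0_good K z 0 _ t gs h1


lemma chain_sum (K : ℕ) : ∀ bs : List ℕ, List.Chain' (fun a b => K < a + b) bs →
    bs.length * K ≤ 2 * bs.sum + K
  | [], _ => by simp
  | [x], _ => by simpa using Nat.le_add_left K (2 * x)
  | x :: y :: rest, h => by
    have h1 : K < x + y := (List.isChain_cons_cons.mp h).1
    have h2 := chain_sum K rest ((List.isChain_cons_cons.mp h).2).tail
    simp only [List.length_cons, List.sum_cons] at h2 ⊢
    have e : (rest.length + 1 + 1) * K = rest.length * K + 2 * K := by ring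
    rw [e]
    linarith

def off {α : Type*} (L : List (List α)) (i : ℕ) : ℕ := ((L.take i).flatten).length

lemma off_zero {α : Type*} (L : List (List α)) : off L 0 = 0 := rfl

lemma off_succ {α : Type*} (L : List (List α)) (i : ℕ) (h : i < L.length) :
    off L (i + 1) = off L i + L[i].length := by
  unfold off
  rw [List.take_succ, List.getElem?_eq_getElem h, List.flatten_append]
  simp

lemma off_big {α : Type*} (L : List (List α)) (i : ℕ) (h : L.length ≤ i) :
    off L i = L.flatten.length := by
  unfold off
  rw [List.take_of_length_le h]

lemma off_mono {α : Type*} (L : List (List α)) (i : ℕ) : off L i ≤ off L (i + 1) := by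
  rcases lt_or_ge i L.length with h | h
  · rw [off_succ L i h]; omega
  · rw [off_big L i h, off_big L (i + 1) (by omega)]

lemma take_flatten_off {α : Type*} (L : List (List α)) (i : ℕ) :
    L.flatten.take (off L i) = (L.take i).flatten := by
  have hsplit : L.flatten = (L.take i).flatten ++ (L.drop i).flatten := by
    rw [← List.flatten_append, List.take_append_drop]
  rw [hsplit]
  exact List.take_left

lemma drop_flatten_off {α : Type*} (L : List (List α)) (i : ℕ) :
    L.flatten.drop (off L i) = (L.drop i).flatten := by
  have hsplit : L.flatten = (L.take i).flatten ++ (L.drop i).flatten := by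
    rw [← List.flatten_append, List.take_append_drop]
  rw [hsplit]
  exact List.drop_left

lemma frag_flatten {α : Type*} (L : List (List α)) (i : ℕ) (h : i < L.length) :
    frag L.flatten (off L i) (off L (i + 1)) = L[i] := by
  unfold frag
  rw [drop_flatten_off, off_succ L i h, Nat.add_sub_cancel_left,
    List.drop_eq_getElem_cons h, List.flatten_cons]
  exact List.take_left


/-- Decomposition of the sparse encoding of a bitmask `A` into
`h = O(1 + |⟨A⟩|/log₂ N)` pieces supporting rank/select. -/
theorem statement19 : ∃ C : ℝ, 0 < C ∧
    ∀ (N : ℕ), 5 ≤ N → ∀ (A : List ℕ), 1 ≤ A.length → (∀ x ∈ A, x ≤ 1) →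
      ∃ (h : ℕ) (p e r : ℕ → ℕ),
        1 ≤ h ∧
        (h : ℝ) ≤ C * (1 + ((sparseEnc A).length : ℝ) / Real.logb 2 (N : ℝ)) ∧
        (∀ i : ℕ, i < h → p i ≤ p (i + 1) ∧ e i ≤ e (i + 1) ∧ r i ≤ r (i + 1)) ∧
        p 0 = 0 ∧ e 0 = 0 ∧ p h = A.length ∧ e h = (sparseEnc A).length ∧
        (∀ i : ℕ, i ≤ h → r i = (A.take (p i)).count 1) ∧
        (∀ i : ℕ, i < h →
          frag (sparseEnc A) (e i) (e (i + 1)) = sparseEnc (frag A (p i) (p (i + 1))) ∧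
          ((∀ x ∈ frag A (p i) (p (i + 1)), x = 0) ∨
            (r (i + 1) - r i ≤ e (i + 1) - e i ∧
              ((e (i + 1) - e i : ℕ) : ℝ) ≤ Real.logb 2 (N : ℝ)))) := by
  refine ⟨3, by norm_num, ?_⟩
  intro N hN A hlen hA
  set K := Nat.log 2 N with hKdef
  have hK2 : 2 ≤ K := by
    have h4 : (2 : ℕ) ^ 2 ≤ N := le_trans (by norm_num) hN
    exact (Nat.le_log_iff_pow_le (by norm_num) (by omega)).mpr h4
  obtain ⟨hflat, henc, hne, hd, hchain⟩ := grAux_good K hK2 A hA 0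
  simp only [List.replicate_zero, List.nil_append] at hflat
  set Ps := grAux K 0 A with hPs
  set Es := Ps.map sparseEnc with hEs
  have hEsflat : Es.flatten = sparseEnc A := henc
  have hlenEs : Es.length = Ps.length := List.length_map _
  -- log facts
  have hKLr : (K : ℝ) ≤ Real.logb 2 N := by
    have h2K : ((2 : ℝ)) ^ K ≤ (N : ℝ) := by
      exact_mod_cast Nat.pow_log_le_self 2 (by omega : N ≠ 0)
    calc (K : ℝ) = Real.logb 2 ((2 : ℝ) ^ K) := by
          rw [Real.logb_pow, Real.logb_self_eq_one (by norm_num)]; ring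
      _ ≤ Real.logb 2 N := by
          exact (Real.logb_le_logb (by norm_num) (by positivity)
            (by exact_mod_cast (by omega : 0 < N))).mpr h2K
  have hLKr : Real.logb 2 N ≤ (K : ℝ) + 1 := by
    have h2K : (N : ℝ) ≤ ((2 : ℝ)) ^ (K + 1) := by
      exact_mod_cast le_of_lt (Nat.lt_pow_succ_log_self (by norm_num) N)
    calc Real.logb 2 N ≤ Real.logb 2 ((2 : ℝ) ^ (K + 1)) := by
          exact (Real.logb_le_logb (by norm_num)
            (by exact_mod_cast (by omega : 0 < N)) (by positivity)).mpr h2K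
      _ = (K : ℝ) + 1 := by
          rw [Real.logb_pow, Real.logb_self_eq_one (by norm_num)]; push_cast; ring
  have hLpos : 0 < Real.logb 2 N := by
    have : (2 : ℝ) ≤ (K : ℝ) := by exact_mod_cast hK2
    linarith
  refine ⟨Ps.length, fun i => off Ps i, fun i => off Es i,
    fun i => (A.take (off Ps i)).count 1, ?_, ?_, ?_, ?_, ?_, ?_, ?_, ?_, ?_⟩
  · -- 1 ≤ h
    have hPsne : Ps ≠ [] := by
      intro h0
      rw [h0] at hflat
      simp only [List.flatten_nil] at hflat
      rw [← hflat] at hlen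
      simp at hlen
    exact List.length_pos_iff.mpr hPsne
  · -- counting bound
    have hS : (Ps.map fun g => (sparseEnc g).length).sum = (sparseEnc A).length := by
      rw [← hEsflat, List.length_flatten, hEs, List.map_map]
      rfl
    have hcount : Ps.length * K ≤ 2 * (sparseEnc A).length + K := by
      have := chain_sum K _ hchain
      rwa [List.length_map, hS] at this
    have c1 : (Ps.length : ℝ) * (K : ℝ)
        ≤ 2 * ((sparseEnc A).length : ℝ) + (K : ℝ) := by exact_mod_cast hcount
    have hh0 : (0 : ℝ) ≤ (Ps.length : ℝ) := Nat.cast_nonneg _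
    have hS0 : (0 : ℝ) ≤ ((sparseEnc A).length : ℝ) := Nat.cast_nonneg _
    have hK2r : (2 : ℝ) ≤ (K : ℝ) := by exact_mod_cast hK2
    have h23 : 2 * Real.logb 2 N ≤ 3 * (K : ℝ) := by linarith
    have hmul : (Ps.length : ℝ) * (2 * Real.logb 2 N)
        ≤ (Ps.length : ℝ) * (3 * (K : ℝ)) := mul_le_mul_of_nonneg_left h23 hh0
    have key : (Ps.length : ℝ) * Real.logb 2 N
        ≤ 3 * Real.logb 2 N + 3 * ((sparseEnc A).length : ℝ) := by nlinarith
    calc (Ps.length : ℝ)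
        ≤ (3 * Real.logb 2 N + 3 * ((sparseEnc A).length : ℝ)) / Real.logb 2 N :=
          (le_div_iff₀ hLpos).mpr key
      _ = 3 * (1 + ((sparseEnc A).length : ℝ) / Real.logb 2 N) := by field_simp
  · -- monotone
    intro i _
    refine ⟨off_mono _ _, off_mono _ _, ?_⟩
    show List.count 1 (List.take (off Ps i) A) ≤ List.count 1 (List.take (off Ps (i + 1)) A)
    have hp := off_mono Ps i
    have heq : A.take (off Ps i) = (A.take (off Ps (i + 1))).take (off Ps i) := by
      rw [List.take_take, min_eq_left hp]
    rw [heq]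
    exact List.Sublist.count_le 1 (List.take_sublist _ _)
  · exact off_zero Ps
  · exact off_zero Es
  · show off Ps Ps.length = A.length
    rw [off_big Ps _ le_rfl, hflat]
  · show off Es Ps.length = (sparseEnc A).length
    rw [off_big Es _ (le_of_eq hlenEs), hEsflat]
  · intro i _
    rfl
  · intro i hi
    have hiE : i < Es.length := by rw [hlenEs]; exact hi
    have hfragA : frag A (off Ps i) (off Ps (i + 1)) = Ps[i] := by
      rw [← hflat]
      exact frag_flatten Ps i hi
    have hEsi : Es[i] = sparseEnc Ps[i] := by
      simp [hEs]
    have hfragE : frag (sparseEnc A) (off Es i) (off Es (i + 1)) = sparseEnc Ps[i] := by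
      rw [← hEsflat, frag_flatten Es i hiE, hEsi]
    have heq : off Es (i + 1) = off Es i + (sparseEnc Ps[i]).length := by
      rw [off_succ Es i hiE, hEsi]
    constructor
    · rw [hfragE, hfragA]
    · rcases hd Ps[i] (List.getElem_mem hi) with hz | hb
      · left
        rw [hfragA]
        exact hz
      · right
        have hrA : A.take (off Ps (i + 1)) = A.take (off Ps i) ++ Ps[i] := by
          rw [← hflat, take_flatten_off, take_flatten_off, List.take_succ,
            List.getElem?_eq_getElem hi, List.flatten_append]
          simp
        constructor
        · show List.count 1 (List.take (off Ps (i + 1)) A)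
              - List.count 1 (List.take (off Ps i) A) ≤ off Es (i + 1) - off Es i
          rw [hrA, List.count_append, heq]
          have hcle : Ps[i].count 1 ≤ (sparseEnc Ps[i]).length := count_one_le_enc Ps[i] 0
          omega
        · show ((off Es (i + 1) - off Es i : ℕ) : ℝ) ≤ Real.logb 2 N
          rw [heq, Nat.add_sub_cancel_left]
          calc ((sparseEnc Ps[i]).length : ℝ) ≤ (K : ℝ) := by exact_mod_cast hb
            _ ≤ Real.logb 2 N := hKLr

end SyncFormal
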